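/- Let F̄ : [0, ∞) → [0, 1] be nonincreasing with F̄(0) = 1 (the tail distribution of an almost surely positive random variable X). If F̄ is log-concave on [0, ∞), then for every integer n ≥ 1, ∫_0^∞ F̄(x) dx ≤ n · ∫_0^∞ F̄(x)^n dx; that is, E[X] ≤ n·E[X_{1:n}], so the computing cost E[X] of the (n,1) fork-early-cancel system is at most the cost n·E[X_{1:n}] of the (n,1) fork-join system. If F̄ is log-convex on [0, ∞), the inequality is reversed: n · ∫_0^∞ F̄(x)^n dx ≤ ∫_0^∞ F̄(x) dx for every integer n ≥ 1. -/

import Mathlib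

open MeasureTheory
open scoped ENNReal

/-- `f` is log-concave on `D`: `f(θx + (1−θ)y) ≥ f(x)^θ f(y)^{1−θ}`. -/
def LogConcaveOn (D : Set ℝ) (f : ℝ → ℝ) : Prop :=
  ∀ ⦃x⦄, x ∈ D → ∀ ⦃y⦄, y ∈ D → ∀ ⦃θ : ℝ⦄, θ ∈ Set.Icc (0 : ℝ) 1 →
    f x ^ θ * f y ^ (1 - θ) ≤ f (θ * x + (1 - θ) * y)

/-- `f` is log-convex on `D`: `f(θx + (1−θ)y) ≤ f(x)^θ f(y)^{1−θ}`. -/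
def LogConvexOn (D : Set ℝ) (f : ℝ → ℝ) : Prop :=
  ∀ ⦃x⦄, x ∈ D → ∀ ⦃y⦄, y ∈ D → ∀ ⦃θ : ℝ⦄, θ ∈ Set.Icc (0 : ℝ) 1 →
    f (θ * x + (1 - θ) * y) ≤ f x ^ θ * f y ^ (1 - θ)

/-- Change of variables `x ↦ x/n` on `(0,∞)` for lower integrals. -/
lemma lintegral_Ioi_div_nat {g : ℝ → ℝ≥0∞} (hg : Measurable g) {n : ℕ} (hn : 1 ≤ n) :
    ∫⁻ x in Set.Ioi (0 : ℝ), g (x / n) = (n : ℝ≥0∞) * ∫⁻ x in Set.Ioi (0 : ℝ), g x := by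
  have hn0 : (0 : ℝ) < (n : ℝ) := by exact_mod_cast Nat.lt_of_lt_of_le Nat.zero_lt_one hn
  set c : ℝ := (n : ℝ)⁻¹ with hc
  have hcpos : 0 < c := inv_pos.mpr hn0
  have hφ : Measurable fun x : ℝ => c * x := (measurable_id.const_mul c)
  have hpre : (fun x : ℝ => c * x) ⁻¹' Set.Ioi 0 = Set.Ioi 0 := by
    rw [Set.preimage_const_mul_Ioi₀ _ hcpos, zero_div]
  calc ∫⁻ x in Set.Ioi (0 : ℝ), g (x / n)
      = ∫⁻ x in Set.Ioi (0 : ℝ), g (c * x) := by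
        simp only [hc, div_eq_inv_mul]
    _ = ∫⁻ y, g y ∂(Measure.map (fun x : ℝ => c * x) (volume.restrict (Set.Ioi 0))) :=
        (lintegral_map hg hφ).symm
    _ = ∫⁻ y, g y ∂((Measure.map (fun x : ℝ => c * x) volume).restrict (Set.Ioi 0)) := by
        rw [Measure.restrict_map hφ measurableSet_Ioi, hpre]
    _ = ∫⁻ y in Set.Ioi (0 : ℝ), g y ∂(ENNReal.ofReal |c⁻¹| • volume) := by
        rw [Real.map_volume_mul_left (ne_of_gt hcpos)]
    _ = ENNReal.ofReal |c⁻¹| * ∫⁻ y in Set.Ioi (0 : ℝ), g y := by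
        rw [Measure.restrict_smul, lintegral_smul_measure, smul_eq_mul]
    _ = (n : ℝ≥0∞) * ∫⁻ x in Set.Ioi (0 : ℝ), g x := by
        rw [hc, inv_inv, abs_of_pos hn0, ENNReal.ofReal_natCast]

/-- For a tail distribution `F̄` (nonincreasing on `[0,∞)`, `F̄(0) = 1`):
log-concavity gives `E[X] = ∫_0^∞ F̄(x) dx ≤ n ∫_0^∞ F̄(x)^n dx = n E[X_{1:n}]`
(the cost of fork-early-cancel is at most that of fork-join), and log-convexity gives
the reverse inequality, for every `n ≥ 1`. -/
theorem early_cancel_cost_comparison (F : ℝ → ℝ)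
    (hrange : ∀ x ≥ (0 : ℝ), F x ∈ Set.Icc (0 : ℝ) 1)
    (hmono : AntitoneOn F (Set.Ici 0)) (h0 : F 0 = 1) :
    (LogConcaveOn (Set.Ici 0) F →
      ∀ n : ℕ, 1 ≤ n →
        ∫⁻ x in Set.Ioi (0 : ℝ), ENNReal.ofReal (F x)
          ≤ (n : ℝ≥0∞) * ∫⁻ x in Set.Ioi (0 : ℝ), ENNReal.ofReal (F x ^ n)) ∧
    (LogConvexOn (Set.Ici 0) F →
      ∀ n : ℕ, 1 ≤ n →
        (n : ℝ≥0∞) * ∫⁻ x in Set.Ioi (0 : ℝ), ENNReal.ofReal (F x ^ n)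
          ≤ ∫⁻ x in Set.Ioi (0 : ℝ), ENNReal.ofReal (F x)) := by
  -- A globally antitone (hence measurable) modification of `F`.
  set G : ℝ → ℝ := fun x => F (max x 0) with hG
  have hGant : Antitone G := fun a b hab =>
    hmono (le_max_right a 0) (le_max_right b 0) (max_le_max hab le_rfl)
  have hGmeas : Measurable G := hGant.measurable
  have hGeq : ∀ x ∈ Set.Ioi (0 : ℝ), G x = F x := fun x hx => by
    simp [hG, max_eq_left (le_of_lt (Set.mem_Ioi.mp hx))]
  have hInt1 : ∫⁻ x in Set.Ioi (0 : ℝ), ENNReal.ofReal (F x)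
      = ∫⁻ x in Set.Ioi (0 : ℝ), ENNReal.ofReal (G x) :=
    setLIntegral_congr_fun measurableSet_Ioi
      (fun x hx => by simp only [hGeq x hx])
  have hIntn : ∀ n : ℕ, ∫⁻ x in Set.Ioi (0 : ℝ), ENNReal.ofReal (F x ^ n)
      = ∫⁻ x in Set.Ioi (0 : ℝ), ENNReal.ofReal (G x ^ n) := fun n =>
    setLIntegral_congr_fun measurableSet_Ioi
      (fun x hx => by simp only [hGeq x hx])
  have hgn : ∀ n : ℕ, Measurable fun x => ENNReal.ofReal (G x ^ n) := fun n =>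
    ENNReal.measurable_ofReal.comp (hGmeas.pow_const n)
  -- basic facts about θ = 1/n
  have key : ∀ n : ℕ, 1 ≤ n → ∀ x : ℝ, 0 < x →
      ((n : ℝ)⁻¹ ∈ Set.Icc (0 : ℝ) 1 ∧ (n : ℝ)⁻¹ * x + (1 - (n : ℝ)⁻¹) * 0 = x / n) := by
    intro n hn x hx
    have hn0 : (0 : ℝ) < (n : ℝ) := by exact_mod_cast Nat.lt_of_lt_of_le Nat.zero_lt_one hn
    refine ⟨⟨le_of_lt (inv_pos.mpr hn0), ?_⟩, by rw [mul_zero, add_zero, inv_mul_eq_div]⟩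
    rw [inv_le_one_iff₀]; right; exact_mod_cast hn
  constructor
  · -- log-concave case
    intro hconc n hn
    have hn0 : (0 : ℝ) < (n : ℝ) := by exact_mod_cast Nat.lt_of_lt_of_le Nat.zero_lt_one hn
    rw [hInt1, hIntn]
    -- pointwise: G x ≤ G (x/n) ^ n on (0,∞)
    have hpt : ∀ x ∈ Set.Ioi (0 : ℝ),
        ENNReal.ofReal (G x) ≤ ENNReal.ofReal (G (x / n) ^ n) := by
      intro x hx
      have hx0 : (0 : ℝ) < x := hx
      have hxn : 0 < x / (n : ℝ) := div_pos hx0 hn0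
      obtain ⟨hθ, heq⟩ := key n hn x hx0
      have h1 := hconc (le_of_lt hx0) (le_refl (0 : ℝ)) hθ
      rw [heq, h0, Real.one_rpow, mul_one] at h1
      -- h1 : F x ^ (n⁻¹ : ℝ) ≤ F (x / n)
      have hFx0 : 0 ≤ F x := (hrange x (le_of_lt hx0)).1
      have h2 : (F x ^ ((n : ℝ)⁻¹)) ^ n ≤ F (x / n) ^ n :=
        pow_le_pow_left₀ (Real.rpow_nonneg hFx0 _) h1 n
      have h3 : (F x ^ ((n : ℝ)⁻¹)) ^ n = F x := by
        rw [← Real.rpow_natCast (F x ^ ((n : ℝ)⁻¹)) n, ← Real.rpow_mul hFx0,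
          inv_mul_cancel₀ (ne_of_gt hn0), Real.rpow_one]
      rw [h3] at h2
      have : G x ≤ G (x / n) ^ n := by
        rw [hGeq x hx, hGeq (x / n) hxn]; exact h2
      exact ENNReal.ofReal_le_ofReal this
    calc ∫⁻ x in Set.Ioi (0 : ℝ), ENNReal.ofReal (G x)
        ≤ ∫⁻ x in Set.Ioi (0 : ℝ), ENNReal.ofReal (G (x / n) ^ n) :=
          setLIntegral_mono ((hgn n).comp (measurable_id.div_const _)) hpt
      _ = (n : ℝ≥0∞) * ∫⁻ x in Set.Ioi (0 : ℝ), ENNReal.ofReal (G x ^ n) :=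
          lintegral_Ioi_div_nat (hgn n) hn
  · -- log-convex case
    intro hconv n hn
    have hn0 : (0 : ℝ) < (n : ℝ) := by exact_mod_cast Nat.lt_of_lt_of_le Nat.zero_lt_one hn
    rw [hInt1, hIntn]
    have hpt : ∀ x ∈ Set.Ioi (0 : ℝ),
        ENNReal.ofReal (G (x / n) ^ n) ≤ ENNReal.ofReal (G x) := by
      intro x hx
      have hx0 : (0 : ℝ) < x := hx
      have hxn : 0 < x / (n : ℝ) := div_pos hx0 hn0
      obtain ⟨hθ, heq⟩ := key n hn x hx0
      have h1 := hconv (le_of_lt hx0) (le_refl (0 : ℝ)) hθ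
      rw [heq, h0, Real.one_rpow, mul_one] at h1
      -- h1 : F (x / n) ≤ F x ^ (n⁻¹ : ℝ)
      have hFx0 : 0 ≤ F x := (hrange x (le_of_lt hx0)).1
      have hFxn0 : 0 ≤ F (x / n) := (hrange (x / n) (le_of_lt hxn)).1
      have h2 : F (x / n) ^ n ≤ (F x ^ ((n : ℝ)⁻¹)) ^ n :=
        pow_le_pow_left₀ hFxn0 h1 n
      have h3 : (F x ^ ((n : ℝ)⁻¹)) ^ n = F x := by
        rw [← Real.rpow_natCast (F x ^ ((n : ℝ)⁻¹)) n, ← Real.rpow_mul hFx0,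
          inv_mul_cancel₀ (ne_of_gt hn0), Real.rpow_one]
      rw [h3] at h2
      have : G (x / n) ^ n ≤ G x := by
        rw [hGeq x hx, hGeq (x / n) hxn]; exact h2
      exact ENNReal.ofReal_le_ofReal this
    calc (n : ℝ≥0∞) * ∫⁻ x in Set.Ioi (0 : ℝ), ENNReal.ofReal (G x ^ n)
        = ∫⁻ x in Set.Ioi (0 : ℝ), ENNReal.ofReal (G (x / n) ^ n) :=
          (lintegral_Ioi_div_nat (hgn n) hn).symm
      _ ≤ ∫⁻ x in Set.Ioi (0 : ℝ), ENNReal.ofReal (G x) :=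
          setLIntegral_mono (ENNReal.measurable_ofReal.comp hGmeas) hpt
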